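/- The quantity C_{P,2,n} satisfies: C_{P,2,1} = 0, C_{P,2,2} = 1, and for every n > 2, C_{P,2,n} = C_{P,2̄,n−2}. -/

import Mathlib

/-- A Roman dominating function: every vertex with value 0 has a neighbor with value 2. -/
def IsRDF {V : Type*} (G : SimpleGraph V) (f : V → Fin 3) : Prop :=
  ∀ v, f v = 0 → ∃ u, G.Adj v u ∧ f u = 2

/-- A minimal Roman dominating function: an rdf such that no rdf `g ≠ f` satisfies `g ≤ f`. -/
def IsMinimalRDF {V : Type*} (G : SimpleGraph V) (f : V → Fin 3) : Prop :=
  IsRDF G f ∧ ∀ g : V → Fin 3, IsRDF G g → g ≤ f → g = f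

/-- The number of minimal Roman dominating functions of `G`. -/
noncomputable def numMinRDF {V : Type*} (G : SimpleGraph V) : ℕ :=
  {f : V → Fin 3 | IsMinimalRDF G f}.ncard

/-- `C_{P,n}`: the number of minimal Roman dominating functions of the path `Pₙ`. -/
noncomputable def CP (n : ℕ) : ℕ := numMinRDF (SimpleGraph.pathGraph n)

/-- `C_{P,2,n}`: the number of minimal rdf `f` of `Pₙ` with `f(v₁) = 2`. -/
noncomputable def CP2 (n : ℕ) : ℕ :=
  {f : Fin n → Fin 3 | IsMinimalRDF (SimpleGraph.pathGraph n) f ∧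
    ∃ h : 0 < n, f ⟨0, h⟩ = 2}.ncard

/-- `C_{P,2̄,n}`: the number of minimal rdf `f` of `Pₙ` with `f(v₁) ≠ 2`. -/
noncomputable def CPbar2 (n : ℕ) : ℕ :=
  {f : Fin n → Fin 3 | IsMinimalRDF (SimpleGraph.pathGraph n) f ∧
    ∀ h : 0 < n, f ⟨0, h⟩ ≠ 2}.ncard

/-- Recursion for `C_{P,2,n}`: it is `0` for `n = 1`, `1` for `n = 2`, and equals
`C_{P,2̄,n-2}` for `n > 2`. -/
lemma fin3_cases : ∀ x : Fin 3, x = 0 ∨ x = 1 ∨ x = 2 := by decide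
lemma fin3_lt1 : ∀ x : Fin 3, x < 1 → x = 0 := by decide
lemma fin3_le0 : ∀ x : Fin 3, x ≤ 0 → x = 0 := by decide
lemma fin3_ge2 : ∀ x : Fin 3, 2 ≤ x → x = 2 := by decide

lemma isMinimalRDF_iff {V : Type*} (G : SimpleGraph V) (f : V → Fin 3) :
    IsMinimalRDF G f ↔ IsRDF G f ∧
      (∀ v, f v = 1 → ∀ u, G.Adj v u → f u ≠ 2) ∧
      (∀ v, f v = 2 → ∃ u, G.Adj v u ∧ f u = 0 ∧ ∀ w, G.Adj u w → w ≠ v → f w ≠ 2) := by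
  classical
  constructor
  · rintro ⟨hrdf, hmin⟩
    refine ⟨hrdf, ?_, ?_⟩
    · intro v hv u hadj hu
      set g : V → Fin 3 := Function.update f v 0 with hg
      have hgv : g v = 0 := Function.update_self v 0 f
      have huv : u ≠ v := by intro h; rw [h, hv] at hu; exact absurd hu (by decide)
      have hgrdf : IsRDF G g := by
        intro w hw
        by_cases hwv : w = v
        · exact ⟨u, hwv ▸ hadj, by rw [hg, Function.update_of_ne huv, hu]⟩
        · rw [hg, Function.update_of_ne hwv] at hw
          obtain ⟨x, hx, hx2⟩ := hrdf w hw
          have hxv : x ≠ v := by intro h; rw [h, hv] at hx2; exact absurd hx2 (by decide)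
          exact ⟨x, hx, by rw [hg, Function.update_of_ne hxv, hx2]⟩
      have hle : g ≤ f := by
        intro w
        by_cases hwv : w = v
        · subst hwv; rw [hgv]; exact Fin.zero_le _
        · rw [hg, Function.update_of_ne hwv]
      have := hmin g hgrdf hle
      rw [this, hv] at hgv; exact absurd hgv (by decide)
    · intro v hv
      by_contra hp
      push_neg at hp
      set g : V → Fin 3 := Function.update f v 1 with hg
      have hgv : g v = 1 := Function.update_self v 1 f
      have hgrdf : IsRDF G g := by
        intro w hw
        have hwv : w ≠ v := by intro h; rw [h, hgv] at hw; exact absurd hw (by decide)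
        rw [hg, Function.update_of_ne hwv] at hw
        obtain ⟨x, hx, hx2⟩ := hrdf w hw
        by_cases hxv : x = v
        · obtain ⟨w', hw', hw'v, hw'2⟩ := hp w (G.adj_symm (hxv ▸ hx)) hw
          exact ⟨w', hw', by rw [hg, Function.update_of_ne hw'v, hw'2]⟩
        · exact ⟨x, hx, by rw [hg, Function.update_of_ne hxv, hx2]⟩
      have hle : g ≤ f := by
        intro w
        by_cases hwv : w = v
        · subst hwv; rw [hgv, hv]; exact (by decide : (1:Fin 3) ≤ 2)
        · rw [hg, Function.update_of_ne hwv]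
      have := hmin g hgrdf hle
      rw [this, hv] at hgv; exact absurd hgv (by decide)
  · rintro ⟨hrdf, h1, h2⟩
    refine ⟨hrdf, ?_⟩
    intro g hg hle
    by_contra hne
    obtain ⟨v, hv⟩ := Function.ne_iff.mp hne
    have hlt : g v < f v := lt_of_le_of_ne (hle v) hv
    rcases fin3_cases (f v) with h0 | h01 | h02
    · rw [h0] at hlt; exact absurd hlt (by simp)
    · have hg0 : g v = 0 := fin3_lt1 _ (h01 ▸ hlt)
      obtain ⟨u, hu, hu2⟩ := hg v hg0
      have hfu : f u = 2 := fin3_ge2 _ (hu2 ▸ hle u)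
      exact h1 v h01 u hu hfu
    · obtain ⟨u, hu, hu0, hpriv⟩ := h2 v h02
      have hgu : g u = 0 := fin3_le0 _ (hu0 ▸ hle u)
      obtain ⟨w, hw, hw2⟩ := hg u hgu
      have hfw : f w = 2 := fin3_ge2 _ (hw2 ▸ hle w)
      by_cases hwv : w = v
      · subst hwv
        exact absurd (hw2 ▸ h02 ▸ hv) (by simp)
      · exact hpriv w hw hwv hfw

lemma struct {m : ℕ} (hm : 0 < m) (f : Fin (m+2) → Fin 3)
    (hf : IsMinimalRDF (SimpleGraph.pathGraph (m+2)) f) (h0 : f ⟨0, by omega⟩ = 2) :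
    f ⟨1, by omega⟩ = 0 ∧ f ⟨2, by omega⟩ ≠ 2 := by
  obtain ⟨u, hadj, hu0, hpriv⟩ := ((isMinimalRDF_iff _ _).mp hf).2.2 ⟨0, by omega⟩ h0
  rw [SimpleGraph.pathGraph_adj] at hadj
  simp only [] at hadj
  have hu1 : u = ⟨1, by omega⟩ := Fin.ext (by simp at hadj ⊢; omega)
  rw [hu1] at hu0 hpriv
  refine ⟨hu0, ?_⟩
  apply hpriv
  · rw [SimpleGraph.pathGraph_adj]; left; rfl
  · exact Fin.ne_of_val_ne (by simp)

noncomputable def shiftF {m : ℕ} (f : Fin (m+2) → Fin 3) : Fin m → Fin 3 :=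
  fun i => f ⟨i.val + 2, by omega⟩

lemma adj_shift {m : ℕ} {i j : Fin m} (h : (SimpleGraph.pathGraph m).Adj i j) :
    (SimpleGraph.pathGraph (m+2)).Adj ⟨i.val+2, by omega⟩ ⟨j.val+2, by omega⟩ := by
  rw [SimpleGraph.pathGraph_adj] at h ⊢; simp at h ⊢; omega

lemma shift_mem {m : ℕ} (hm : 0 < m) (f : Fin (m+2) → Fin 3)
    (hf : IsMinimalRDF (SimpleGraph.pathGraph (m+2)) f) (h0 : f ⟨0, by omega⟩ = 2) :
    IsMinimalRDF (SimpleGraph.pathGraph m) (shiftF f) ∧ shiftF f ⟨0, hm⟩ ≠ 2 := by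
  obtain ⟨hf1, hf2⟩ := struct hm f hf h0
  obtain ⟨hrdf, hc1, hc2⟩ := (isMinimalRDF_iff _ _).mp hf
  constructor
  · rw [isMinimalRDF_iff]
    refine ⟨?_, ?_, ?_⟩
    · -- rdf
      intro i hi
      obtain ⟨u, hadj, hu2⟩ := hrdf ⟨i.val + 2, by omega⟩ hi
      rw [SimpleGraph.pathGraph_adj] at hadj
      simp only [] at hadj
      have hub : u.val < m + 2 := u.2
      have hu2' : 2 ≤ u.val := by
        by_contra hc
        push_neg at hc
        have : u = ⟨1, by omega⟩ := Fin.ext (by simp at hadj ⊢; omega)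
        rw [this, hf1] at hu2
        exact absurd hu2 (by decide)
      refine ⟨⟨u.val - 2, by omega⟩, ?_, ?_⟩
      · rw [SimpleGraph.pathGraph_adj]; simp at hadj ⊢; omega
      · have : (⟨u.val - 2 + 2, by omega⟩ : Fin (m+2)) = u := Fin.ext (by simp; omega)
        simp only [shiftF]; rw [this]; exact hu2
    · -- no 1 adjacent to 2
      intro i hi1 j hadj hj2
      exact hc1 ⟨i.val+2, by omega⟩ hi1 ⟨j.val+2, by omega⟩ (adj_shift hadj) hj2
    · -- private neighbors
      intro i hi2
      have hi1 : 1 ≤ i.val := by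
        by_contra hc
        push_neg at hc
        have : i = (⟨0, hm⟩ : Fin m) := Fin.ext (by show i.val = 0; omega)
        simp only [shiftF] at hi2
        rw [this] at hi2
        exact hf2 hi2
      obtain ⟨u, hadj, hu0, hpriv⟩ := hc2 ⟨i.val+2, by omega⟩ hi2
      rw [SimpleGraph.pathGraph_adj] at hadj
      simp only [] at hadj
      have hub : u.val < m + 2 := u.2
      have hu2' : 2 ≤ u.val := by simp at hadj; omega
      refine ⟨⟨u.val - 2, by omega⟩, ?_, ?_, ?_⟩
      · rw [SimpleGraph.pathGraph_adj]; simp at hadj ⊢; omega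
      · have : (⟨u.val - 2 + 2, by omega⟩ : Fin (m+2)) = u := Fin.ext (by simp; omega)
        simp only [shiftF]; rw [this]; exact hu0
      · intro w hadjw hnew hw2
        refine hpriv ⟨w.val + 2, by omega⟩ ?_ ?_ hw2
        · rw [SimpleGraph.pathGraph_adj] at hadjw ⊢
          simp at hadjw ⊢; omega
        · refine Fin.ne_of_val_ne ?_
          simp
          intro hc
          exact hnew (Fin.ext (by omega))
  · simp only [shiftF]
    exact hf2

def extF {m : ℕ} (g : Fin m → Fin 3) : Fin (m+2) → Fin 3 :=
  fun i => if h : 2 ≤ i.val then g ⟨i.val - 2, by omega⟩ else if i.val = 0 then 2 else 0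

lemma extF_zero {m : ℕ} (g : Fin m → Fin 3) : extF g ⟨0, by omega⟩ = 2 := rfl
lemma extF_one {m : ℕ} (g : Fin m → Fin 3) : extF g ⟨1, by omega⟩ = 0 := rfl
lemma extF_ge {m : ℕ} (g : Fin m → Fin 3) (v : Fin (m+2)) (h : 2 ≤ v.val) :
    extF g v = g ⟨v.val - 2, by omega⟩ := dif_pos h

lemma extF_eq0 {m : ℕ} (g : Fin m → Fin 3) (v : Fin (m+2)) (h : v.val = 0) :
    extF g v = 2 := by simp [extF, h]

lemma extF_eq1 {m : ℕ} (g : Fin m → Fin 3) (v : Fin (m+2)) (h : v.val = 1) :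
    extF g v = 0 := by simp [extF, h]

lemma shiftF_extF {m : ℕ} (g : Fin m → Fin 3) : shiftF (extF g) = g := by
  funext i
  simp only [shiftF]
  rw [extF_ge g _ (by simp)]
  exact congrArg g (Fin.ext (by show i.val + 2 - 2 = i.val; omega))

lemma extend_mem {m : ℕ} (hm : 0 < m) (g : Fin m → Fin 3)
    (hg : IsMinimalRDF (SimpleGraph.pathGraph m) g) (hg0 : g ⟨0, hm⟩ ≠ 2) :
    IsMinimalRDF (SimpleGraph.pathGraph (m+2)) (extF g) := by
  obtain ⟨hrdf, hc1, hc2⟩ := (isMinimalRDF_iff _ _).mp hg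
  rw [isMinimalRDF_iff]
  refine ⟨?_, ?_, ?_⟩
  · -- rdf
    intro v hv
    have hvb : v.val < m + 2 := v.2
    rcases Nat.lt_or_ge v.val 2 with hlt | hge
    · have hv1 : v.val = 1 := by
        rcases Nat.lt_or_ge v.val 1 with h0 | h1
        · rw [extF_eq0 g v (by omega)] at hv; exact absurd hv (by decide)
        · omega
      refine ⟨⟨0, by omega⟩, ?_, extF_eq0 g _ rfl⟩
      rw [SimpleGraph.pathGraph_adj]
      simp only [Fin.val_mk]
      omega
    · rw [extF_ge g v hge] at hv
      obtain ⟨u, hadj, hu2⟩ := hrdf _ hv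
      rw [SimpleGraph.pathGraph_adj] at hadj
      simp only [Fin.val_mk] at hadj
      have hub : u.val < m := u.2
      refine ⟨⟨u.val + 2, by omega⟩, ?_, ?_⟩
      · rw [SimpleGraph.pathGraph_adj]
        simp only [Fin.val_mk]
        omega
      · rw [extF_ge g _ (by simp)]
        exact (congrArg g (Fin.ext (by show u.val + 2 - 2 = u.val; omega))).trans hu2
  · -- no 1 adjacent to 2
    intro v hv1 u hadj hu2
    have hvb : v.val < m + 2 := v.2
    have hub : u.val < m + 2 := u.2
    rw [SimpleGraph.pathGraph_adj] at hadj
    have hvge : 2 ≤ v.val := by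
      by_contra hc
      push_neg at hc
      rcases Nat.lt_or_ge v.val 1 with h0 | h1
      · rw [extF_eq0 g v (by omega)] at hv1; exact absurd hv1 (by decide)
      · rw [extF_eq1 g v (by omega)] at hv1; exact absurd hv1 (by decide)
    have huge : 2 ≤ u.val := by
      by_contra hc
      push_neg at hc
      rw [extF_eq1 g u (by omega)] at hu2; exact absurd hu2 (by decide)
    rw [extF_ge g v hvge] at hv1
    rw [extF_ge g u huge] at hu2
    refine hc1 _ hv1 ⟨u.val - 2, by omega⟩ ?_ hu2
    rw [SimpleGraph.pathGraph_adj]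
    simp only [Fin.val_mk]
    omega
  · -- private neighbor for each 2
    intro v hv2
    have hvb : v.val < m + 2 := v.2
    rcases Nat.lt_or_ge v.val 2 with hlt | hge
    · have hv0 : v.val = 0 := by
        rcases Nat.lt_or_ge v.val 1 with h0 | h1
        · omega
        · exfalso
          rw [extF_eq1 g v (by omega)] at hv2; exact absurd hv2 (by decide)
      refine ⟨⟨1, by omega⟩, ?_, extF_eq1 g _ rfl, ?_⟩
      · rw [SimpleGraph.pathGraph_adj]
        simp only [Fin.val_mk]
        omega
      · intro w hadjw hnew hw2
        rw [SimpleGraph.pathGraph_adj] at hadjw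
        simp only [Fin.val_mk] at hadjw
        have hwb : w.val < m + 2 := w.2
        have hwval : w.val = 2 := by
          rcases hadjw with h | h
          · omega
          · exfalso; exact hnew (Fin.ext (by omega))
        rw [extF_ge g w (by omega)] at hw2
        exact hg0 ((congrArg g (Fin.ext (by show (0:ℕ) = w.val - 2; omega))).trans hw2)
    · rw [extF_ge g v hge] at hv2
      have hvge3 : 3 ≤ v.val := by
        by_contra hc
        push_neg at hc
        exact hg0 ((congrArg g (Fin.ext (by show (0:ℕ) = v.val - 2; omega))).trans hv2)
      obtain ⟨u, hadj, hu0, hpriv⟩ := hc2 _ hv2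
      rw [SimpleGraph.pathGraph_adj] at hadj
      simp only [Fin.val_mk] at hadj
      have hub : u.val < m := u.2
      refine ⟨⟨u.val + 2, by omega⟩, ?_, ?_, ?_⟩
      · rw [SimpleGraph.pathGraph_adj]
        simp only [Fin.val_mk]
        omega
      · rw [extF_ge g _ (by simp)]
        exact (congrArg g (Fin.ext (by show u.val + 2 - 2 = u.val; omega))).trans hu0
      · intro w hadjw hnew hw2
        rw [SimpleGraph.pathGraph_adj] at hadjw
        simp only [Fin.val_mk] at hadjw
        have hwb : w.val < m + 2 := w.2
        have hwge : 2 ≤ w.val := by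
          by_contra hc
          push_neg at hc
          rw [extF_eq1 g w (by omega)] at hw2; exact absurd hw2 (by decide)
        rw [extF_ge g w hwge] at hw2
        refine hpriv ⟨w.val - 2, by omega⟩ ?_ ?_ hw2
        · rw [SimpleGraph.pathGraph_adj]
          simp only [Fin.val_mk]
          omega
        · refine Fin.ne_of_val_ne ?_
          show w.val - 2 ≠ v.val - 2
          intro hc
          exact hnew (Fin.ext (by omega))

lemma inj_shift {m : ℕ} (hm : 0 < m) (f f' : Fin (m+2) → Fin 3)
    (hf : IsMinimalRDF (SimpleGraph.pathGraph (m+2)) f) (h0 : f ⟨0, by omega⟩ = 2)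
    (hf' : IsMinimalRDF (SimpleGraph.pathGraph (m+2)) f') (h0' : f' ⟨0, by omega⟩ = 2)
    (h : shiftF f = shiftF f') : f = f' := by
  funext v
  have hvb : v.val < m + 2 := v.2
  rcases Nat.lt_or_ge v.val 2 with hlt | hge
  · rcases Nat.lt_or_ge v.val 1 with h0v | h1v
    · have hv : v = (⟨0, by omega⟩ : Fin (m+2)) := Fin.ext (by show v.val = 0; omega)
      rw [hv, h0, h0']
    · have hv : v = (⟨1, by omega⟩ : Fin (m+2)) := Fin.ext (by show v.val = 1; omega)
      rw [hv, (struct hm f hf h0).1, (struct hm f' hf' h0').1]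
  · have hc := congrFun h ⟨v.val - 2, by omega⟩
    simp only [shiftF] at hc
    have hveq : (⟨v.val - 2 + 2, by omega⟩ : Fin (m+2)) = v :=
      Fin.ext (by show v.val - 2 + 2 = v.val; omega)
    rw [hveq] at hc
    exact hc

instance {n : ℕ} : DecidableRel (SimpleGraph.pathGraph n).Adj :=
  fun _ _ => decidable_of_iff' _ SimpleGraph.pathGraph_adj

instance {n : ℕ} (f g : Fin n → Fin 3) : Decidable (f ≤ g) :=
  decidable_of_iff (∀ v, f v ≤ g v) (by rw [Pi.le_def])

instance {n : ℕ} (f : Fin n → Fin 3) : Decidable (IsRDF (SimpleGraph.pathGraph n) f) := by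
  unfold IsRDF; infer_instance

instance {n : ℕ} (f : Fin n → Fin 3) : Decidable (IsMinimalRDF (SimpleGraph.pathGraph n) f) := by
  unfold IsMinimalRDF; infer_instance

theorem CP2_recursion :
    CP2 1 = 0 ∧ CP2 2 = 1 ∧ ∀ n : ℕ, 2 < n → CP2 n = CPbar2 (n - 2) := by
  refine ⟨?_, ?_, ?_⟩
  · have he : {f : Fin 1 → Fin 3 | IsMinimalRDF (SimpleGraph.pathGraph 1) f ∧
        ∃ h : 0 < 1, f ⟨0, h⟩ = 2} = ∅ :=
      Set.eq_empty_iff_forall_notMem.mpr (by decide)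
    rw [CP2, he, Set.ncard_empty]
  · have he : {f : Fin 2 → Fin 3 | IsMinimalRDF (SimpleGraph.pathGraph 2) f ∧
        ∃ h : 0 < 2, f ⟨0, h⟩ = 2} = {![2, 0]} := by
      rw [Set.eq_singleton_iff_unique_mem]
      exact ⟨by decide, by decide⟩
    rw [CP2, he, Set.ncard_singleton]
  · intro n hn
    obtain ⟨m, rfl⟩ : ∃ m, n = m + 2 := ⟨n - 2, by omega⟩
    have hm : 0 < m := by omega
    have hsub : m + 2 - 2 = m := by omega
    rw [hsub, CP2, CPbar2]
    set A : Set (Fin (m+2) → Fin 3) :=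
      {f | IsMinimalRDF (SimpleGraph.pathGraph (m+2)) f ∧ ∃ h : 0 < m + 2, f ⟨0, h⟩ = 2} with hA
    set B : Set (Fin m → Fin 3) :=
      {g | IsMinimalRDF (SimpleGraph.pathGraph m) g ∧ ∀ h : 0 < m, g ⟨0, h⟩ ≠ 2} with hB
    have himg : shiftF '' A = B := by
      ext g
      constructor
      · rintro ⟨f, ⟨hmin, hpos, h0⟩, rfl⟩
        obtain ⟨hmin', hne'⟩ := shift_mem hm f hmin h0
        exact ⟨hmin', fun _ => hne'⟩
      · rintro ⟨hmin, hne⟩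
        refine ⟨extF g, ⟨extend_mem hm g hmin (hne hm), by omega, extF_eq0 g _ rfl⟩, shiftF_extF g⟩
    have hinj : Set.InjOn shiftF A := by
      rintro f ⟨hf, hfpos, hf0⟩ f' ⟨hf', hfpos', hf0'⟩ heq
      exact inj_shift hm f f' hf hf0 hf' hf0' heq
    rw [← himg, Set.ncard_image_of_injOn hinj]
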